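/- Let d ≥ 1, η > 0, c ∈ ℝ^d and b ∈ ℝ. Then ∫_{ℝ^d} exp(−(‖x − c‖ − b)²/(2η)) dx ≤ exp(1/4 + d·b²/η) · (2πη)^{d/2}. -/

import Mathlib

open MeasureTheory

theorem stmt_1 (d : ℕ) (hd : 1 ≤ d) (η b : ℝ) (hη : 0 < η) (c : EuclideanSpace ℝ (Fin d)) :
    ∫ x : EuclideanSpace ℝ (Fin d), Real.exp (-(‖x - c‖ - b) ^ 2 / (2 * η)) ≤
      Real.exp (1 / 4 + d * b ^ 2 / η) * (2 * Real.pi * η) ^ ((d : ℝ) / 2) := by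
  have hD : (1:ℝ) ≤ (d:ℝ) := by exact_mod_cast hd
  set D : ℝ := (d:ℝ) with hDdef
  have hDpos : 0 < D := by linarith
  set β : ℝ := D / ((2*D+1)*η) with hβdef
  have hβ : 0 < β := by positivity
  -- pointwise bound
  have key : ∀ x : EuclideanSpace ℝ (Fin d),
      Real.exp (-(‖x - c‖ - b) ^ 2 / (2 * η)) ≤
        Real.exp (D * b ^ 2 / η) * Real.exp (-β * ‖x - c‖ ^ 2) := by
    intro x
    rw [← Real.exp_add]
    apply Real.exp_le_exp.mpr
    set a : ℝ := ‖x - c‖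
    have hcalc : D * b ^ 2 / η + -β * a ^ 2 - (-(a - b) ^ 2 / (2 * η))
        = (a - (2*D+1)*b) ^ 2 / (2 * (2*D+1) * η) := by
      rw [hβdef]
      field_simp
      ring
    have hpos : 0 ≤ (a - (2*D+1)*b) ^ 2 / (2 * (2*D+1) * η) := by positivity
    linarith [hcalc ▸ hpos]
  -- integrability of the bounding function
  have hg_int : Integrable (fun x : EuclideanSpace ℝ (Fin d) =>
      Real.exp (D * b ^ 2 / η) * Real.exp (-β * ‖x - c‖ ^ 2)) := by
    apply Integrable.const_mul
    have h0 : Integrable (fun x : EuclideanSpace ℝ (Fin d) => Real.exp (-β * ‖x‖ ^ 2)) := by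
      have := (GaussianFourier.integrable_cexp_neg_mul_sq_norm_add
        (V := EuclideanSpace ℝ (Fin d)) (b := (β:ℂ)) (by simpa using hβ) 0 0).norm
      convert this using 2 with x
      simp [Complex.norm_exp]
      left; norm_cast
    exact h0.comp_sub_right c
  -- integrability of LHS
  have hf_int : Integrable (fun x : EuclideanSpace ℝ (Fin d) =>
      Real.exp (-(‖x - c‖ - b) ^ 2 / (2 * η))) := by
    apply hg_int.mono'
    · apply Continuous.aestronglyMeasurable
      fun_prop
    · filter_upwards with x
      rw [Real.norm_eq_abs, abs_of_nonneg (Real.exp_pos _).le]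
      exact key x
  have hint : (∫ x : EuclideanSpace ℝ (Fin d), Real.exp (-β * ‖x - c‖ ^ 2))
      = (Real.pi / β) ^ (D / 2) := by
    rw [integral_sub_right_eq_self (fun x : EuclideanSpace ℝ (Fin d) =>
      Real.exp (-β * ‖x‖ ^ 2)) c]
    rw [GaussianFourier.integral_rexp_neg_mul_sq_norm hβ]
    norm_num [hDdef]
  calc ∫ x : EuclideanSpace ℝ (Fin d), Real.exp (-(‖x - c‖ - b) ^ 2 / (2 * η))
      ≤ ∫ x : EuclideanSpace ℝ (Fin d),
          Real.exp (D * b ^ 2 / η) * Real.exp (-β * ‖x - c‖ ^ 2) :=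
        integral_mono hf_int hg_int key
    _ = Real.exp (D * b ^ 2 / η) * (Real.pi / β) ^ (D / 2) := by
        rw [integral_const_mul, hint]
    _ ≤ Real.exp (1 / 4 + D * b ^ 2 / η) * (2 * Real.pi * η) ^ (D / 2) := by
        have hsplit : Real.pi / β = (2 * Real.pi * η) * ((2*D+1)/(2*D)) := by
          rw [hβdef]; field_simp
        have h2πη : (0:ℝ) ≤ 2 * Real.pi * η := by positivity
        rw [hsplit, Real.mul_rpow h2πη (by positivity)]
        have hle : ((2*D+1)/(2*D) : ℝ) ^ (D / 2) ≤ Real.exp (1/4) := by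
          have h1 : ((2*D+1)/(2*D) : ℝ) ≤ Real.exp (1/(2*D)) := by
            have := Real.add_one_le_exp (1/(2*D))
            have heq : ((2*D+1)/(2*D) : ℝ) = 1/(2*D) + 1 := by field_simp; ring
            linarith [heq ▸ this]
          calc ((2*D+1)/(2*D) : ℝ) ^ (D / 2)
              ≤ (Real.exp (1/(2*D))) ^ (D / 2) :=
                Real.rpow_le_rpow (by positivity) h1 (by positivity)
            _ = Real.exp (1/(2*D) * (D/2)) := (Real.exp_mul _ _).symm
            _ = Real.exp (1/4) := by
                congr 1
                field_simp
                ring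
        rw [Real.exp_add]
        calc Real.exp (D * b ^ 2 / η) * ((2 * Real.pi * η) ^ (D / 2)
              * ((2*D+1)/(2*D)) ^ (D / 2))
            ≤ Real.exp (D * b ^ 2 / η) * ((2 * Real.pi * η) ^ (D / 2) * Real.exp (1/4)) := by
              gcongr
          _ = Real.exp (1/4) * Real.exp (D * b ^ 2 / η) * (2 * Real.pi * η) ^ (D / 2) := by ring
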